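/- Let 𝕂 = ℝ or ℂ and let A be an n×n lower triangular matrix over 𝕂 whose diagonal entries satisfy 0 < |A_1| < |A_2| < … < |A_n|. Suppose that all of the entries on the first column of the matrix (A_1⁻¹A − I + Δ)⁻¹ are non-zero. Then as l → ∞ the matrix powers (A_1 A⁻¹)^l converge to a limit matrix L such that L_{i1} ≠ 0 for every i ∈ {1, …, n}, while L_{ij} = 0 for every j ≥ 2. -/

import Mathlib

open Matrix Filter Topology

lemma aux_zero {𝕂 : Type*} [RCLike 𝕂] {lam : 𝕂} (hlam : ‖lam‖ < 1) {y d : ℕ → 𝕂}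
    (hrec : ∀ l, y (l+1) = lam * y l + d l) (hd : Tendsto d atTop (nhds 0)) :
    Tendsto y atTop (nhds 0) := by
  set r := ‖lam‖ with hr
  have hr0 : 0 ≤ r := norm_nonneg _
  rw [Metric.tendsto_atTop]
  intro ε hε
  have hε2 : 0 < ε * (1 - r) / 2 := by nlinarith
  rw [Metric.tendsto_atTop] at hd
  obtain ⟨N, hN⟩ := hd (ε * (1 - r) / 2) hε2
  have key : ∀ m, ‖y (N + m)‖ ≤ r ^ m * ‖y N‖ + ε / 2 := by
    intro m
    induction m with
    | zero => simp [hr0]; nlinarith [norm_nonneg (y N)]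
    | succ m ih =>
      have hdm : ‖d (N + m)‖ < ε * (1 - r) / 2 := by
        simpa [dist_eq_norm] using hN (N + m) (Nat.le_add_right _ _)
      have : y (N + m + 1) = lam * y (N + m) + d (N + m) := hrec _
      calc ‖y (N + (m+1))‖ = ‖lam * y (N + m) + d (N + m)‖ := by
            rw [← this]; ring_nf
        _ ≤ r * ‖y (N + m)‖ + ‖d (N + m)‖ := by
            refine (norm_add_le _ _).trans ?_
            rw [norm_mul]
        _ ≤ r * (r ^ m * ‖y N‖ + ε / 2) + ε * (1 - r) / 2 := by
            have := norm_nonneg (y (N+m))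
            nlinarith
        _ ≤ r ^ (m+1) * ‖y N‖ + ε / 2 := by ring_nf; nlinarith
  have hpow : Tendsto (fun m => r ^ m * ‖y N‖) atTop (nhds 0) := by
    simpa using (tendsto_pow_atTop_nhds_zero_of_lt_one hr0 hlam).mul_const ‖y N‖
  rw [Metric.tendsto_atTop] at hpow
  obtain ⟨M, hM⟩ := hpow (ε / 2) (by positivity)
  refine ⟨N + M, fun l hl => ?_⟩
  obtain ⟨m, rfl⟩ := Nat.exists_eq_add_of_le hl
  have hm : M ≤ M + m := Nat.le_add_right _ _
  have hidx : N + M + m = N + (M + m) := by ring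
  have h1 : r ^ (M + m) * ‖y N‖ < ε / 2 := by
    have := hM (M + m) hm
    rw [dist_eq_norm, sub_zero] at this
    calc r ^ (M+m) * ‖y N‖ ≤ |r ^ (M+m) * ‖y N‖| := le_abs_self _
      _ < ε / 2 := this
  rw [dist_eq_norm, sub_zero, hidx]
  calc ‖y (N + (M + m))‖ ≤ r ^ (M+m) * ‖y N‖ + ε / 2 := key _
    _ < ε / 2 + ε / 2 := by linarith
    _ = ε := by ring

lemma aux_fix {𝕂 : Type*} [RCLike 𝕂] {lam : 𝕂} (hlam : ‖lam‖ < 1) {x e : ℕ → 𝕂} {s c : 𝕂}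
    (hrec : ∀ l, x (l+1) = lam * x l + e l) (he : Tendsto e atTop (nhds s))
    (hc : c = lam * c + s) : Tendsto x atTop (nhds c) := by
  have h0 : Tendsto (fun l => x l - c) atTop (nhds 0) := by
    apply aux_zero hlam (d := fun l => e l - s)
    · intro l
      rw [hrec l]
      linear_combination -hc
    · simpa using he.sub_const s
  simpa using h0.add_const c

/-- **Lemma 3 (Lemma `three`).** Let `A` be an `n × n` lower triangular matrix over
`𝕂 = ℝ` or `ℂ` with `0 < |A_1| < … < |A_n|`, and suppose all entries of the first column
of `(A_1⁻¹ A - I + Δ)⁻¹` are non-zero, where `Δ` has a `1` in position `(1,1)` and zeros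
elsewhere. Then `(A_1 A⁻¹)^l` converges as `l → ∞` to a matrix `L` whose first-column
entries are all non-zero and whose remaining entries are all zero. -/
theorem stmt_5 {𝕂 : Type*} [RCLike 𝕂] {n : ℕ} (hn : 0 < n)
    (A : Matrix (Fin n) (Fin n) 𝕂)
    (hlow : ∀ i j : Fin n, i < j → A i j = 0)
    (hpos : ∀ i : Fin n, 0 < ‖A i i‖)
    (hmono : StrictMono fun i : Fin n => ‖A i i‖)
    (hcol : ∀ i : Fin n,
      (((A ⟨0, hn⟩ ⟨0, hn⟩)⁻¹ • A - 1 +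
        Matrix.single (⟨0, hn⟩ : Fin n) (⟨0, hn⟩ : Fin n) (1 : 𝕂))⁻¹) i ⟨0, hn⟩ ≠ 0) :
    ∃ L : Matrix (Fin n) (Fin n) 𝕂,
      Tendsto (fun l : ℕ => (A ⟨0, hn⟩ ⟨0, hn⟩ • A⁻¹) ^ l) atTop (nhds L) ∧
      (∀ i : Fin n, L i ⟨0, hn⟩ ≠ 0) ∧
      (∀ i j : Fin n, j ≠ ⟨0, hn⟩ → L i j = 0) := by
  set z : Fin n := ⟨0, hn⟩ with hz
  set a : 𝕂 := A z z with ha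
  have ha0 : a ≠ 0 := by
    intro h; have := hpos z; rw [← ha, h] at this; simp at this
  -- z is the bottom element
  have hzle : ∀ i : Fin n, z ≤ i := fun i => Fin.mk_le_of_le_val (Nat.zero_le _)
  have hzlt : ∀ i : Fin n, i ≠ z → z < i := fun i hi => lt_of_le_of_ne (hzle i) (Ne.symm hi)
  -- A is lower triangular (BlockTriangular toDual)
  have hAtri : A.BlockTriangular OrderDual.toDual := by
    intro i j h
    exact hlow i j h
  have hAdet : IsUnit A.det := by
    rw [Matrix.det_of_lowerTriangular A hAtri]
    refine isUnit_iff_ne_zero.mpr (Finset.prod_ne_zero_iff.mpr fun i _ => ?_)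
    intro h; have := hpos i; rw [h] at this; simp at this
  haveI : Invertible A := A.invertibleOfIsUnitDet hAdet
  -- A⁻¹ lower triangular
  have hAitri : (A⁻¹).BlockTriangular OrderDual.toDual :=
    blockTriangular_inv_of_blockTriangular hAtri
  have hAilow : ∀ i j : Fin n, i < j → A⁻¹ i j = 0 := fun i j h => hAitri h
  -- diagonal of A⁻¹
  have hAidiag : ∀ i : Fin n, A⁻¹ i i = (A i i)⁻¹ := by
    intro i
    have h1 : (A * A⁻¹) i i = 1 := by rw [Matrix.mul_nonsing_inv A hAdet]; simp
    rw [Matrix.mul_apply] at h1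
    rw [Finset.sum_eq_single i] at h1
    · exact (inv_eq_of_mul_eq_one_right h1).symm
    · intro k _ hk
      rcases lt_or_gt_of_ne hk with h | h
      · rw [hAilow k i h, mul_zero]
      · rw [hlow i k h, zero_mul]
    · simp
  -- the matrix M and eigenvector w
  set M : Matrix (Fin n) (Fin n) 𝕂 :=
    a⁻¹ • A - 1 + Matrix.single z z (1 : 𝕂) with hM
  have hMdet : IsUnit M.det := by
    by_contra h
    have := Matrix.nonsing_inv_apply_not_isUnit M h
    exact hcol z (by rw [this]; simp)
  set w : Fin n → 𝕂 := fun i => M⁻¹ i z with hw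
  have hw0 : ∀ i, w i ≠ 0 := fun i => hcol i
  -- row z of M is the z-th standard basis row
  have hMrow : ∀ k : Fin n, M z k = if k = z then 1 else 0 := by
    intro k
    rcases eq_or_ne k z with rfl | hk
    · simp [hM, Matrix.one_apply, inv_mul_cancel₀ ha0, ← ha]
    · have hzk : z < k := hzlt k hk
      simp [hM, Matrix.one_apply, Ne.symm hk, hlow z k hzk, hk]
  -- M * M⁻¹ = 1 entries
  have hMw : ∀ i : Fin n, ∑ k, M i k * w k = if i = z then 1 else 0 := by
    intro i
    have h1 : (M * M⁻¹) i z = (1 : Matrix (Fin n) (Fin n) 𝕂) i z := by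
      rw [Matrix.mul_nonsing_inv M hMdet]
    rw [Matrix.mul_apply] at h1
    rw [h1, Matrix.one_apply]
  -- w z = 1
  have hwz : w z = 1 := by
    have := hMw z
    rw [Finset.sum_eq_single z] at this
    · rw [hMrow z] at this; simpa using this
    · intro k _ hk; rw [hMrow k, if_neg hk, zero_mul]
    · simp
  -- A w = a w
  have hAw : ∀ i : Fin n, ∑ k, A i k * w k = a * w i := by
    intro i
    rcases eq_or_ne i z with rfl | hi
    · rw [Finset.sum_eq_single_of_mem z (Finset.mem_univ z)
        (fun k _ hk => by rw [hlow z k (hzlt k hk), zero_mul]), hwz]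
    · have := hMw i
      rw [if_neg hi] at this
      have hexp : ∀ k : Fin n, M i k = a⁻¹ * A i k - (if i = k then 1 else 0) := by
        intro k
        have hstd : Matrix.single z z (1:𝕂) i k = 0 :=
          Matrix.single_apply_of_ne _ _ _ _ _ (fun h => hi (h.1.symm))
        simp [hM, Matrix.one_apply, hstd]
      rw [Finset.sum_congr rfl (fun k _ => by rw [hexp k])] at this
      simp only [sub_mul, Finset.sum_sub_distrib, ite_mul, one_mul, zero_mul,
        Finset.sum_ite_eq, Finset.mem_univ, if_pos] at this
      have h2 : ∑ k, a⁻¹ * (A i k * w k) = w i := by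
        rw [← sub_eq_zero]
        rw [← this]
        congr 1
        exact Finset.sum_congr rfl (fun k _ => by ring)
      have h3 : ∑ k, A i k * w k = a * ∑ k, a⁻¹ * (A i k * w k) := by
        rw [Finset.mul_sum]
        exact Finset.sum_congr rfl (fun k _ => by field_simp)
      rw [h3, h2]
  -- the matrix B
  set B : Matrix (Fin n) (Fin n) 𝕂 := a • A⁻¹ with hB
  have hBlow : ∀ i j : Fin n, i < j → B i j = 0 := by
    intro i j h
    simp [hB, Matrix.smul_apply, hAilow i j h]
  have hBdiag : ∀ i : Fin n, B i i = a * (A i i)⁻¹ := by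
    intro i
    simp [hB, Matrix.smul_apply, hAidiag i, smul_eq_mul]
  have hBz : B z z = 1 := by
    rw [hBdiag z, ← ha, mul_inv_cancel₀ ha0]
  have hBlt : ∀ i : Fin n, i ≠ z → ‖B i i‖ < 1 := by
    intro i hi
    rw [hBdiag i, norm_mul, norm_inv]
    have h1 : ‖a‖ < ‖A i i‖ := hmono (hzlt i hi)
    have h2 : 0 < ‖A i i‖ := hpos i
    rw [mul_inv_lt_iff₀ h2, one_mul]
    exact h1
  -- B w = w
  have hBw : ∀ i : Fin n, ∑ k, B i k * w k = w i := by
    have h1 : A.mulVec w = a • w := by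
      ext i
      simp [Matrix.mulVec, dotProduct, hAw i, smul_eq_mul]
    have h2 : B.mulVec w = w := by
      have h3 : A⁻¹.mulVec (A.mulVec w) = w := by
        rw [Matrix.mulVec_mulVec, Matrix.nonsing_inv_mul A hAdet, Matrix.one_mulVec]
      rw [h1, Matrix.mulVec_smul] at h3
      rw [hB, Matrix.smul_mulVec, h3]
    intro i
    have := congrFun h2 i
    simpa [Matrix.mulVec, dotProduct] using this
  -- the limit matrix
  set L : Matrix (Fin n) (Fin n) 𝕂 := Matrix.of fun i j => if j = z then w i else 0 with hL
  -- row z of B ^ l is constant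
  have hrowz : ∀ (l : ℕ) (j : Fin n), (B ^ l) z j = (1 : Matrix (Fin n) (Fin n) 𝕂) z j := by
    intro l
    induction l with
    | zero => intro j; simp
    | succ l ih =>
      intro j
      rw [pow_succ', Matrix.mul_apply]
      rw [Finset.sum_eq_single_of_mem z (Finset.mem_univ z)
        (fun k _ hk => by rw [hBlow z k (hzlt k hk), zero_mul])]
      rw [hBz, one_mul, ih j]
  -- entrywise convergence, by strong induction on the row
  have main : ∀ m : ℕ, ∀ i : Fin n, (i : ℕ) = m → ∀ j,
      Tendsto (fun l => (B ^ l) i j) atTop (nhds (L i j)) := by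
    intro m
    induction m using Nat.strong_induction_on with
    | _ m IH =>
    intro i him j
    rcases eq_or_ne i z with rfl | hi
    · have hconst : (fun l => (B ^ l) z j) = fun _ : ℕ => (1 : Matrix (Fin n) (Fin n) 𝕂) z j :=
        funext fun l => hrowz l j
      have hLz : L z j = (1 : Matrix (Fin n) (Fin n) 𝕂) z j := by
        rcases eq_or_ne j z with rfl | hj
        · simp [hL, hwz, Matrix.one_apply]
        · simp [hL, Matrix.one_apply, hj, Ne.symm hj]
      rw [hconst, hLz]
      exact tendsto_const_nhds
    · apply aux_fix (hBlt i hi)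
        (e := fun l => ∑ k ∈ Finset.univ.erase i, B i k * (B ^ l) k j)
        (s := ∑ k ∈ Finset.univ.erase i, B i k * L k j)
      · intro l
        rw [pow_succ', Matrix.mul_apply]
        rw [← Finset.add_sum_erase Finset.univ _ (Finset.mem_univ i)]
      · apply tendsto_finset_sum
        intro k hk
        have hki : k ≠ i := Finset.ne_of_mem_erase hk
        rcases lt_or_gt_of_ne hki with h | h
        · have hkm : (k : ℕ) < m := him ▸ h
          exact ((IH k hkm k rfl j).const_mul (B i k))
        · have hB0 : B i k = 0 := hBlow i k h
          simp only [hB0, zero_mul]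
          exact tendsto_const_nhds
      · rcases eq_or_ne j z with rfl | hj
        · have hLw : ∀ k : Fin n, L k z = w k := fun k => by simp [hL]
          simp only [hLw]
          have hs := hBw i
          rw [← Finset.add_sum_erase Finset.univ (fun k => B i k * w k)
            (Finset.mem_univ i)] at hs
          exact hs.symm
        · have hL0 : ∀ k : Fin n, L k j = 0 := fun k => by simp [hL, hj]
          simp [hL0]
  refine ⟨L, ?_, ?_, ?_⟩
  · rw [show (fun l : ℕ => (a • A⁻¹) ^ l) = fun l : ℕ => B ^ l from rfl]
    refine tendsto_pi_nhds.mpr ?_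
    intro i
    rw [tendsto_pi_nhds]
    intro j
    exact main (i : ℕ) i rfl j
  · intro i
    simpa [hL] using hw0 i
  · intro i j hj
    simp [hL, hj]
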